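/- arXiv:2212.02922 — 3 statements merged into one kernel-verified Lean document; each statement's English description precedes it below -/
import Mathlib

section
/- Let A ∈ ℂ^{nN×nN} be a block matrix with N×N blocks A_{ij} ∈ ℂ^{n×n}. Then σ̄(A) ≤ max_i max{r_i, c_i}, where r_i = Σ_{j=1}^N σ̄(A_{ij}) and c_i = Σ_{j=1}^N σ̄(A_{ji}). -/
/-- The largest singular value of a square complex matrix. -/
noncomputable def sigmaMax {m : Type*} [Fintype m] [DecidableEq m]
    (A : Matrix m m ℂ) : ℝ :=
  ‖Matrix.toEuclideanCLM (𝕜 := ℂ) A‖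

/-- Block Gershgorin-type bound: for a block matrix `A = (A_{ij})` with equal
square blocks, `σ̄(A) ≤ max_i max{Σ_j σ̄(A_{ij}), Σ_j σ̄(A_{ji})}`. -/
theorem stmt4 {N n : ℕ} (A : Matrix (Fin N × Fin n) (Fin N × Fin n) ℂ) :
    sigmaMax A ≤ ⨆ i : Fin N,
      max (∑ j : Fin N, sigmaMax (Matrix.of fun a b : Fin n => A (i, a) (j, b)))
          (∑ j : Fin N, sigmaMax (Matrix.of fun a b : Fin n => A (j, a) (i, b))) := by
  classical
  set B : Fin N → Fin N → Matrix (Fin n) (Fin n) ℂ :=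
    fun i j => Matrix.of fun a b : Fin n => A (i, a) (j, b) with hB
  set σ : Fin N → Fin N → ℝ := fun i j => sigmaMax (B i j) with hσ
  set M : ℝ := ⨆ i : Fin N, max (∑ j, σ i j) (∑ j, σ j i) with hM
  have hσnn : ∀ i j, 0 ≤ σ i j := fun i j => norm_nonneg _
  have hbdd : BddAbove (Set.range fun i : Fin N =>
      max (∑ j, σ i j) (∑ j, σ j i)) := Set.Finite.bddAbove (Set.finite_range _)
  have hrM : ∀ i, (∑ j, σ i j) ≤ M :=
    fun i => le_trans (le_max_left _ _) (le_ciSup hbdd i)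
  have hcM : ∀ i, (∑ j, σ j i) ≤ M :=
    fun i => le_trans (le_max_right _ _) (le_ciSup hbdd i)
  have hMnn : 0 ≤ M := by
    rcases isEmpty_or_nonempty (Fin N) with h | ⟨⟨i⟩⟩
    · rw [hM, Real.iSup_of_isEmpty]
    · exact le_trans (Finset.sum_nonneg fun j _ => hσnn i j) (hrM i)
  refine ContinuousLinearMap.opNorm_le_bound _ hMnn fun x => ?_
  -- block components of x
  set xb : Fin N → EuclideanSpace ℂ (Fin n) :=
    fun j => (WithLp.equiv 2 (Fin n → ℂ)).symm (fun b => x (j, b)) with hxb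
  set y : Fin N → EuclideanSpace ℂ (Fin n) :=
    fun i => ∑ j, Matrix.toEuclideanCLM (𝕜 := ℂ) (B i j) (xb j) with hy
  have happly : ∀ i a, (Matrix.toEuclideanCLM (𝕜 := ℂ) A x) (i, a) = y i a := by
    intro i a
    have h1 : (Matrix.toEuclideanCLM (𝕜 := ℂ) A x) (i, a) = (A.mulVec fun p => x p) (i, a) := rfl
    have hsum : y i a = ∑ j, (Matrix.toEuclideanCLM (𝕜 := ℂ) (B i j) (xb j)) a :=
      by rw [hy]; simp only [WithLp.ofLp_sum, Finset.sum_apply]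
    rw [h1, hsum]
    have : ∀ j, (Matrix.toEuclideanCLM (𝕜 := ℂ) (B i j) (xb j)) a
        = ((B i j).mulVec fun b => x (j, b)) a := fun j => rfl
    simp only [this, Matrix.mulVec, dotProduct, Fintype.sum_prod_type, hB, Matrix.of_apply]
    rfl
  have hnormsq : ∀ (m : Type) [Fintype m] (v : EuclideanSpace ℂ m),
      ‖v‖ ^ 2 = ∑ k, ‖v k‖ ^ 2 := by
    intro m _ v
    rw [EuclideanSpace.norm_eq, Real.sq_sqrt (Finset.sum_nonneg fun _ _ => sq_nonneg _)]
  -- norm of blocks of Ax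
  have hynorm : ∀ i, ‖y i‖ ≤ ∑ j, σ i j * ‖xb j‖ := by
    intro i
    refine le_trans (norm_sum_le _ _) (Finset.sum_le_sum fun j _ => ?_)
    exact (Matrix.toEuclideanCLM (𝕜 := ℂ) (B i j)).le_opNorm _
  -- Cauchy–Schwarz on each block row
  have hCS : ∀ i, ‖y i‖ ^ 2 ≤ (∑ j, σ i j) * ∑ j, σ i j * ‖xb j‖ ^ 2 := by
    intro i
    have h1 : ‖y i‖ ^ 2 ≤ (∑ j, σ i j * ‖xb j‖) ^ 2 := by
      have := hynorm i
      have hnn : (0:ℝ) ≤ ‖y i‖ := norm_nonneg _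
      nlinarith
    refine h1.trans ?_
    have h2 := Finset.sum_mul_sq_le_sq_mul_sq Finset.univ
      (fun j => Real.sqrt (σ i j)) (fun j => Real.sqrt (σ i j) * ‖xb j‖)
    calc (∑ j, σ i j * ‖xb j‖) ^ 2
        = (∑ j, Real.sqrt (σ i j) * (Real.sqrt (σ i j) * ‖xb j‖)) ^ 2 := by
          congr 1; refine Finset.sum_congr rfl fun j _ => ?_
          rw [← mul_assoc, Real.mul_self_sqrt (hσnn i j)]
      _ ≤ (∑ j, Real.sqrt (σ i j) ^ 2) * ∑ j, (Real.sqrt (σ i j) * ‖xb j‖) ^ 2 := h2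
      _ = (∑ j, σ i j) * ∑ j, σ i j * ‖xb j‖ ^ 2 := by
          congr 1
          · exact Finset.sum_congr rfl fun j _ => Real.sq_sqrt (hσnn i j)
          · refine Finset.sum_congr rfl fun j _ => ?_
            rw [mul_pow, Real.sq_sqrt (hσnn i j)]
  -- total bound on ‖Ax‖²
  have hxsq : ‖x‖ ^ 2 = ∑ j, ‖xb j‖ ^ 2 := by
    rw [hnormsq _ x]
    simp only [hnormsq _ (xb _)]
    rw [Fintype.sum_prod_type]
    rfl
  have hAxsq : ‖Matrix.toEuclideanCLM (𝕜 := ℂ) A x‖ ^ 2 ≤ (M * ‖x‖) ^ 2 := by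
    rw [hnormsq _ (Matrix.toEuclideanCLM (𝕜 := ℂ) A x)]
    calc ∑ k : Fin N × Fin n, ‖(Matrix.toEuclideanCLM (𝕜 := ℂ) A x) k‖ ^ 2
        = ∑ i, ‖y i‖ ^ 2 := by
          rw [Fintype.sum_prod_type]
          refine Finset.sum_congr rfl fun i _ => ?_
          rw [hnormsq _ (y i)]
          exact Finset.sum_congr rfl fun a _ => by rw [happly i a]
      _ ≤ ∑ i, (∑ j, σ i j) * ∑ j, σ i j * ‖xb j‖ ^ 2 :=
          Finset.sum_le_sum fun i _ => hCS i
      _ ≤ ∑ i, M * ∑ j, σ i j * ‖xb j‖ ^ 2 := by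
          refine Finset.sum_le_sum fun i _ => mul_le_mul_of_nonneg_right (hrM i) ?_
          exact Finset.sum_nonneg fun j _ =>
            mul_nonneg (hσnn i j) (sq_nonneg _)
      _ = M * ∑ j, (∑ i, σ i j) * ‖xb j‖ ^ 2 := by
          rw [← Finset.mul_sum, Finset.sum_comm]
          congr 1
          exact Finset.sum_congr rfl fun j _ => by rw [Finset.sum_mul]
      _ ≤ M * ∑ j, M * ‖xb j‖ ^ 2 := by
          refine mul_le_mul_of_nonneg_left (Finset.sum_le_sum fun j _ => ?_) hMnn
          exact mul_le_mul_of_nonneg_right (hcM j) (sq_nonneg _)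
      _ = (M * ‖x‖) ^ 2 := by
          rw [← Finset.mul_sum, ← hxsq]; ring
  calc ‖Matrix.toEuclideanCLM (𝕜 := ℂ) A x‖
      = Real.sqrt (‖Matrix.toEuclideanCLM (𝕜 := ℂ) A x‖ ^ 2) :=
        (Real.sqrt_sq (norm_nonneg _)).symm
    _ ≤ Real.sqrt ((M * ‖x‖) ^ 2) := Real.sqrt_le_sqrt hAxsq
    _ = M * ‖x‖ := Real.sqrt_sq (mul_nonneg hMnn (norm_nonneg _))
end

section
/- Let A, B ∈ ℝ^{n×n} and let C be the 2n×2n block matrix C = [[A, −B], [B, A]]. Then the set of singular values of C equals the union of the set of singular values of A − iB and the set of singular values of A + iB. -/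
open Matrix

/-- The set of singular values of a square complex matrix `A`: nonnegative
reals `σ` such that `σ²` is an eigenvalue of `Aᴴ A`. -/
def svSet {m : Type*} [Fintype m] (A : Matrix m m ℂ) : Set ℝ :=
  {σ | 0 ≤ σ ∧ ∃ v : m → ℂ, v ≠ 0 ∧ (Aᴴ * A).mulVec v = ((σ : ℂ) ^ 2) • v}

lemma block_eig {n : ℕ} (S K : Matrix (Fin n) (Fin n) ℂ) (μ : ℂ) :
    (∃ w : Fin n ⊕ Fin n → ℂ, w ≠ 0 ∧ (fromBlocks S (-K) K S) *ᵥ w = μ • w) ↔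
      ((∃ v : Fin n → ℂ, v ≠ 0 ∧ (S - Complex.I • K) *ᵥ v = μ • v) ∨
       (∃ v : Fin n → ℂ, v ≠ 0 ∧ (S + Complex.I • K) *ᵥ v = μ • v)) := by
  constructor
  · rintro ⟨w, hw, hweq⟩
    rw [fromBlocks_mulVec] at hweq
    set u : Fin n → ℂ := w ∘ Sum.inl with hu
    set x : Fin n → ℂ := w ∘ Sum.inr with hx
    have h1 : S *ᵥ u - K *ᵥ x = μ • u := by
      funext i
      have := congrFun hweq (Sum.inl i)
      simpa [Sum.elim_inl, neg_mulVec, sub_eq_add_neg, hu] using this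
    have h2 : K *ᵥ u + S *ᵥ x = μ • x := by
      funext i
      have := congrFun hweq (Sum.inr i)
      simpa [hx] using this
    have key : ∀ c : ℂ, c * c = -1 → (S - c • K) *ᵥ (u - c • x) = μ • (u - c • x) := by
      intro c hc
      have expand : (S - c • K) *ᵥ (u - c • x)
          = (S *ᵥ u - K *ᵥ x) - c • (K *ᵥ u + S *ᵥ x) := by
        simp only [sub_mulVec, mulVec_sub, mulVec_smul, smul_mulVec, smul_smul, hc,
          smul_sub, smul_add, neg_smul, one_smul]
        module
      rw [expand, h1, h2, smul_comm, smul_sub]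
    by_cases hm : u - Complex.I • x = 0
    · right
      refine ⟨u + Complex.I • x, ?_, ?_⟩
      · intro h0
        apply hw
        have hsu : (2 : ℂ) • u = 0 := by
          have e : (2 : ℂ) • u = (u - Complex.I • x) + (u + Complex.I • x) := by module
          rw [e, hm, h0, add_zero]
        have hsx : (2 * Complex.I) • x = 0 := by
          have e : (2 * Complex.I) • x = (u + Complex.I • x) - (u - Complex.I • x) := by module
          rw [e, hm, h0, sub_zero]
        have hu0 : u = 0 := by
          simpa using (smul_eq_zero.mp hsu).resolve_left two_ne_zero
        have hx0 : x = 0 := by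
          refine (smul_eq_zero.mp hsx).resolve_left ?_
          simp [Complex.I_ne_zero]
        funext i
        cases i with
        | inl i => exact congrFun hu0 i
        | inr i => exact congrFun hx0 i
      · have := key (-Complex.I) (by rw [neg_mul_neg, Complex.I_mul_I])
        simpa [neg_smul, sub_neg_eq_add] using this
    · left
      exact ⟨u - Complex.I • x, hm, key Complex.I Complex.I_mul_I⟩
  · rintro (⟨v, hv, hveq⟩ | ⟨v, hv, hveq⟩)
    · refine ⟨Sum.elim v (Complex.I • v), ?_, ?_⟩
      · intro h0
        exact hv (funext fun i => congrFun h0 (Sum.inl i))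
      · rw [fromBlocks_mulVec]
        have hl : S *ᵥ v - Complex.I • (K *ᵥ v) = μ • v := by
          simpa [sub_mulVec, smul_mulVec] using hveq
        have e1 : S *ᵥ v + (-K) *ᵥ (Complex.I • v) = μ • v := by
          have e1' : S *ᵥ v + (-K) *ᵥ (Complex.I • v)
              = S *ᵥ v - Complex.I • (K *ᵥ v) := by
            rw [neg_mulVec, mulVec_smul]; module
          exact e1'.trans hl
        have e2 : K *ᵥ v + S *ᵥ (Complex.I • v) = μ • (Complex.I • v) := by
          have e2' : K *ᵥ v + S *ᵥ (Complex.I • v)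
              = Complex.I • (S *ᵥ v - Complex.I • (K *ᵥ v))
                + (1 + Complex.I * Complex.I) • (K *ᵥ v) := by
            rw [mulVec_smul]; module
          rw [e2', hl, Complex.I_mul_I]; module
        funext i
        cases i with
        | inl i => simpa using congrFun e1 i
        | inr i => simpa using congrFun e2 i
    · refine ⟨Sum.elim v (-(Complex.I • v)), ?_, ?_⟩
      · intro h0
        exact hv (funext fun i => congrFun h0 (Sum.inl i))
      · rw [fromBlocks_mulVec]
        have hl : S *ᵥ v + Complex.I • (K *ᵥ v) = μ • v := by
          simpa [add_mulVec, smul_mulVec] using hveq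
        have e1 : S *ᵥ v + (-K) *ᵥ (-(Complex.I • v)) = μ • v := by
          have e1' : S *ᵥ v + (-K) *ᵥ (-(Complex.I • v))
              = S *ᵥ v + Complex.I • (K *ᵥ v) := by
            rw [neg_mulVec, mulVec_neg, mulVec_smul]; module
          exact e1'.trans hl
        have e2 : K *ᵥ v + S *ᵥ (-(Complex.I • v)) = μ • (-(Complex.I • v)) := by
          have e2' : K *ᵥ v + S *ᵥ (-(Complex.I • v))
              = (-Complex.I) • (S *ᵥ v + Complex.I • (K *ᵥ v))
                + (1 + Complex.I * Complex.I) • (K *ᵥ v) := by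
            rw [mulVec_neg, mulVec_smul]; module
          rw [e2', hl, Complex.I_mul_I]; module
        funext i
        cases i with
        | inl i => simpa using congrFun e1 i
        | inr i => simpa using congrFun e2 i

lemma matid1 {n : ℕ} (M N : Matrix (Fin n) (Fin n) ℂ) :
    (fromBlocks M (-N) N M)ᴴ * (fromBlocks M (-N) N M) =
      fromBlocks (Mᴴ * M + Nᴴ * N) (-(Mᴴ * N - Nᴴ * M)) (Mᴴ * N - Nᴴ * M) (Mᴴ * M + Nᴴ * N) := by
  rw [fromBlocks_conjTranspose, fromBlocks_multiply]
  simp only [conjTranspose_neg]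
  congr 1 <;> noncomm_ring

lemma matid2 {n : ℕ} (M N : Matrix (Fin n) (Fin n) ℂ) :
    (M - Complex.I • N)ᴴ * (M - Complex.I • N) =
      (Mᴴ * M + Nᴴ * N) - Complex.I • (Mᴴ * N - Nᴴ * M) := by
  simp only [conjTranspose_sub, conjTranspose_smul, Complex.star_def, Complex.conj_I,
    sub_mul, mul_sub, Matrix.smul_mul, Matrix.mul_smul, smul_smul, Complex.I_mul_I]
  match_scalars <;> ring_nf <;> simp [Complex.I_sq]

lemma matid3 {n : ℕ} (M N : Matrix (Fin n) (Fin n) ℂ) :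
    (M + Complex.I • N)ᴴ * (M + Complex.I • N) =
      (Mᴴ * M + Nᴴ * N) + Complex.I • (Mᴴ * N - Nᴴ * M) := by
  simp only [conjTranspose_add, conjTranspose_smul, Complex.star_def, Complex.conj_I,
    add_mul, mul_add, Matrix.smul_mul, Matrix.mul_smul, smul_smul, Complex.I_mul_I]
  match_scalars <;> ring_nf <;> simp [Complex.I_sq]

/-- For real `A`, `B` and `C = [[A, -B], [B, A]]`, the singular values of `C`
are exactly the singular values of `A - iB` together with those of `A + iB`. -/
theorem stmt5 {n : ℕ} (A B : Matrix (Fin n) (Fin n) ℝ) :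
    svSet ((Matrix.fromBlocks A (-B) B A).map (Complex.ofReal)) =
      svSet (A.map (Complex.ofReal) - Complex.I • B.map (Complex.ofReal)) ∪
      svSet (A.map (Complex.ofReal) + Complex.I • B.map (Complex.ofReal)) := by
  set M := A.map (Complex.ofReal) with hM
  set N := B.map (Complex.ofReal) with hN
  have hmap : (Matrix.fromBlocks A (-B) B A).map (Complex.ofReal) = fromBlocks M (-N) N M := by
    rw [fromBlocks_map]
    have : (-B).map (Complex.ofReal) = -N := by ext i j; simp [hN]
    rw [this]
  ext σ
  simp only [svSet, Set.mem_setOf_eq, Set.mem_union, hmap, matid1, matid2, matid3]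
  rw [block_eig]
  exact and_or_left
end

section
/- For every choice of h̄ > 0 and 0 < λ₂ ≤ λ_N, there exist 0 < μ₁ < μ₂ such that (μ₁+μ₂)/(h̄ + max{h̄, 2μ₁}) > λ_N/λ₂; consequently the controller gains (k₁, k₂) satisfying the design inequalities always exist. -/
/-- For any `h̄ > 0` and `0 < λ₂ ≤ λ_N` there exist `0 < μ₁ < μ₂` making the
consistency condition hold, and consequently controller gains `(k₁, k₂)`
satisfying the design inequalities always exist. -/
theorem stmt12 (hbar lam2 lamN : ℝ)
    (hh : 0 < hbar) (hl2 : 0 < lam2) (hlN : lam2 ≤ lamN) :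
    ∃ mu1 mu2 : ℝ, 0 < mu1 ∧ mu1 < mu2 ∧
      (mu1 + mu2) / (hbar + max hbar (2 * mu1)) > lamN / lam2 ∧
      ∃ k₁ k₂ : ℝ,
        (2 * (mu2 - mu1) / (hbar * lamN * (mu1 + mu2 + hbar)) > k₁ ∧ k₁ > 0) ∧
        (min (2 / (hbar * lamN)) (4 / (lamN * (2 * mu1 + hbar))) > k₂ ∧
          k₂ > 4 / (lam2 * (mu1 + mu2))) ∧
        (4 / (lamN * (mu1 + mu2 + hbar)) > k₂ - k₁ ∧ k₂ - k₁ > 0) := by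
  have hN : 0 < lamN := lt_of_lt_of_le hl2 hlN
  refine ⟨hbar / 2, hbar / 2 + 2 * hbar * lamN / lam2, by positivity, by
    have : 0 < 2 * hbar * lamN / lam2 := by positivity
    linarith, ?_, ?_⟩
  · have hmax : max hbar (2 * (hbar / 2)) = hbar := by
      rw [show 2 * (hbar / 2) = hbar by ring, max_self]
    rw [hmax, gt_iff_lt, div_lt_div_iff₀ hl2 (by linarith)]
    have h1 : hbar / 2 + (hbar / 2 + 2 * hbar * lamN / lam2)
        = hbar + 2 * hbar * lamN / lam2 := by ring
    rw [h1]
    have h2 : (hbar + 2 * hbar * lamN / lam2) * lam2 = lam2 * hbar + 2 * hbar * lamN := by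
      field_simp
    rw [h2]
    nlinarith [mul_pos hh hl2]
  · refine ⟨(lam2 + 4 * lamN) / (hbar * (lam2 + lamN) * (lam2 + 2 * lamN)),
      (lam2 + 4 * lamN) / (hbar * lamN * (lam2 + 2 * lamN)), ⟨?_, by positivity⟩,
      ⟨?_, ?_⟩, ?_, ?_⟩
    · rw [gt_iff_lt, div_lt_div_iff₀ (by positivity) (by positivity)]
      have h2l : (0:ℝ) < 2 * hbar * lamN / lam2 := by positivity
      have key : 2 * hbar * lamN / lam2 * lam2 = 2 * hbar * lamN := by field_simp
      nlinarith [mul_pos hh hN, mul_pos (mul_pos hh hN) hl2, sq_nonneg lam2,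
        mul_pos hh (mul_pos hN hN), mul_pos (mul_pos hh hh) hN,
        mul_pos (mul_pos (mul_pos hh hh) hN) hN,
        mul_pos (mul_pos (mul_pos (mul_pos hh hh) hN) hN) hl2,
        mul_pos (mul_pos (mul_pos hh hh) hN) hl2]
    · rw [gt_iff_lt, lt_min_iff]
      constructor
      · rw [div_lt_div_iff₀ (by positivity) (by positivity)]
        nlinarith [mul_pos hh hN, mul_pos (mul_pos hh hN) hl2,
          mul_pos (mul_pos hh hN) hN]
      · have : 2 * (hbar / 2) + hbar = 2 * hbar := by ring
        rw [this, div_lt_div_iff₀ (by positivity) (by positivity)]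
        nlinarith [mul_pos hh hN, mul_pos (mul_pos hh hN) hl2,
          mul_pos (mul_pos hh hN) hN]
    · rw [gt_iff_lt, div_lt_div_iff₀ (by positivity) ?hpos]
      case hpos =>
        have : 0 < 2 * hbar * lamN / lam2 := by positivity
        positivity
      have key : lam2 * (hbar / 2 + (hbar / 2 + 2 * hbar * lamN / lam2))
          = lam2 * hbar + 2 * hbar * lamN := by field_simp; ring
      rw [key]
      nlinarith [mul_pos hh hN, mul_pos (mul_pos hh hN) hl2,
        mul_pos (mul_pos hh hN) hN, mul_pos hh hl2,
        mul_pos (mul_pos hh hl2) hl2, mul_pos (mul_pos hh hl2) hN]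
    · have hne1 : hbar ≠ 0 := hh.ne'
      have hne2 : lam2 ≠ 0 := hl2.ne'
      have hne3 : lamN ≠ 0 := hN.ne'
      have hne4 : lam2 + lamN ≠ 0 := by positivity
      have hne5 : lam2 + 2 * lamN ≠ 0 := by positivity
      have hlhs : (lam2 + 4 * lamN) / (hbar * lamN * (lam2 + 2 * lamN)) -
          (lam2 + 4 * lamN) / (hbar * (lam2 + lamN) * (lam2 + 2 * lamN))
          = lam2 * (lam2 + 4 * lamN) /
            (hbar * lamN * ((lam2 + lamN) * (lam2 + 2 * lamN))) := by
        field_simp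
        ring
      have hrhs : 4 / (lamN * (hbar / 2 + (hbar / 2 + 2 * hbar * lamN / lam2) + hbar))
          = 2 * lam2 / (hbar * lamN * (lam2 + lamN)) := by
        rw [div_eq_div_iff]
        · field_simp
          ring
        · have : 0 < hbar / 2 + (hbar / 2 + 2 * hbar * lamN / lam2) + hbar := by positivity
          positivity
        · positivity
      rw [gt_iff_lt, hlhs, hrhs, div_lt_div_iff₀ (by positivity) (by positivity)]
      nlinarith [mul_pos hh hN, mul_pos (mul_pos hh hN) hl2,
        mul_pos (mul_pos (mul_pos hh hN) hl2) hl2,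
        mul_pos (mul_pos (mul_pos hh hN) hl2) hN,
        mul_pos (mul_pos (mul_pos (mul_pos hh hN) hl2) hl2) hl2,
        mul_pos (mul_pos (mul_pos (mul_pos hh hN) hl2) hl2) hN,
        mul_pos (mul_pos (mul_pos (mul_pos hh hN) hl2) hN) hN]
    · rw [gt_iff_lt, sub_pos, div_lt_div_iff₀ (by positivity) (by positivity)]
      nlinarith [mul_pos hh hN, mul_pos (mul_pos hh hl2) hl2,
        mul_pos (mul_pos hh hl2) hN, mul_pos (mul_pos hh hN) hN,
        mul_pos (mul_pos (mul_pos hh hl2) hl2) hl2,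
        mul_pos (mul_pos (mul_pos hh hl2) hl2) hN,
        mul_pos (mul_pos (mul_pos hh hl2) hN) hN,
        mul_pos (mul_pos (mul_pos hh hN) hN) hN]
end
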